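/- (Nesting inequality, rank 1 horizontal case.) Let Z be a monomial scheme with row lengths h_1 ≥ h_2 ≥ ... and horizontal slopes μ_m = (1/m)∑_{j=1}^m(h_j + j - 1) - 1. Suppose k maximizes μ_m over all m. Let W_k be the scheme with rows h_{k+1}, h_{k+2}, ..., with horizontal slopes ν_i = (1/i)∑_{j=1}^i(h_{k+j} + j - 1) - 1. Then for every i, ν_i + k ≤ μ_k. -/

import Mathlib

open Finset

/-- The `m`-th horizontal slope `μ_m = (1/m) ∑_{j=1}^m (h_j + j - 1) - 1` of a block
diagram with row lengths `h 1, h 2, ...`. -/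
noncomputable def horizSlope (h : ℕ → ℝ) (m : ℕ) : ℝ :=
  (∑ j ∈ Finset.range m, (h (j + 1) + (j : ℝ))) / m - 1

/-- (Nesting inequality, rank 1 horizontal case.) Let `Z` be a monomial scheme with `r`
rows of non-increasing positive lengths `h 1 ≥ h 2 ≥ ⋯` and horizontal slopes `μ_m`.
Suppose `k` maximizes `μ_m` over all `m`. Let `W_k` be the scheme with rows
`h_{k+1}, h_{k+2}, …`, with horizontal slopes `ν_i`. Then for every `i`,
`ν_i + k ≤ μ_k`. -/
theorem stmt14 (h : ℕ → ℝ) (r k : ℕ) (hk : 1 ≤ k) (hkr : k ≤ r)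
    (hpos : ∀ j, 1 ≤ j → j ≤ r → 1 ≤ h j)
    (hrow : ∀ j, 1 ≤ j → j < r → h (j + 1) ≤ h j)
    (hmax : ∀ m, 1 ≤ m → m ≤ r → horizSlope h m ≤ horizSlope h k) :
    ∀ i, 1 ≤ i → i ≤ r - k →
      horizSlope (fun j => h (k + j)) i + k ≤ horizSlope h k := by
  intro i hi hir
  have hik : k + i ≤ r := by omega
  have hmu := hmax (k + i) (by omega) hik
  set A := ∑ j ∈ Finset.range k, (h (j + 1) + (j : ℝ)) with hA
  set B := ∑ j ∈ Finset.range i, (h (k + (j + 1)) + (j : ℝ)) with hB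
  have hk0 : (0 : ℝ) < k := by exact_mod_cast hk
  have hi0 : (0 : ℝ) < i := by exact_mod_cast hi
  have hki0 : (0 : ℝ) < (k : ℝ) + i := by linarith
  have hsum : ∑ j ∈ Finset.range (k + i), (h (j + 1) + (j : ℝ))
      = A + (B + i * k) := by
    rw [Finset.sum_range_add]
    have h2 : ∀ j ∈ Finset.range i,
        h (k + j + 1) + ((k + j : ℕ) : ℝ) = (h (k + (j + 1)) + (j : ℝ)) + k := by
      intro j _
      rw [Nat.add_assoc]
      push_cast
      ring
    have h3 : ∑ j ∈ Finset.range i, (h (k + j + 1) + ((k + j : ℕ) : ℝ))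
        = B + (i : ℝ) * k := by
      calc ∑ j ∈ Finset.range i, (h (k + j + 1) + ((k + j : ℕ) : ℝ))
          = ∑ j ∈ Finset.range i, ((h (k + (j + 1)) + (j : ℝ)) + k) :=
            Finset.sum_congr rfl h2
        _ = B + (i : ℝ) * k := by
            rw [Finset.sum_add_distrib, Finset.sum_const, Finset.card_range,
              nsmul_eq_mul]
    rw [h3]
  have hmu' : (A + (B + i * k)) / ((k : ℝ) + i) - 1 ≤ A / k - 1 := by
    have := hmu
    unfold horizSlope at this
    rw [hsum] at this
    push_cast at this ⊢
    convert this using 3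
  have key : A + (B + i * k) ≤ A / k * ((k : ℝ) + i) := by
    rw [← div_le_iff₀ hki0]
    linarith
  have hAk : A / k * ((k : ℝ) + i) = A + i * (A / k) := by
    field_simp
  have key2 : B + i * k ≤ i * (A / k) := by linarith [key, hAk]
  have goal2 : (B + i * k) / i ≤ A / k := by
    rw [div_le_iff₀ hi0]
    calc B + i * k ≤ i * (A / k) := key2
    _ = A / k * i := by ring
  unfold horizSlope
  have : B / i + k = (B + i * k) / i := by field_simp
  simp only [hB] at this ⊢
  linarith [goal2, this]
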